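/- The 2-color Rado number of the equation x₁² + x₂² + ... + x₁₂² = z² (twelve squares summing to a square) equals 23: every 2-coloring of {1, ..., 23} admits a monochromatic solution, and there exists a 2-coloring of {1, ..., 22} with no monochromatic solution. -/

import Mathlib

instance (priority := 2000) decAllBool (p : Bool → Prop) [d : ∀ b, Decidable (p b)] :
    Decidable (∀ b, p b) :=
  decidable_of_iff (p false ∧ p true) (by
    constructor
    · rintro ⟨h1, h2⟩ b; cases b <;> assumption
    · intro h; exact ⟨h false, h true⟩)

set_option synthInstance.maxSize 1000000
set_option synthInstance.maxHeartbeats 1000000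
set_option maxHeartbeats 4000000
set_option maxRecDepth 100000

theorem fin2cases : ∀ a : Fin 2, a = 0 ∨ a = 1 := by decide

theorem fin2eq : ∀ (a b : Fin 2), (decide (a = 0) = decide (b = 0)) → a = b := by decide

theorem radoKey : ∀ b1 b2 b3 b4 b5 b6 b7 b8 b9 b10 b11 b12 b13 b14 b15 : Bool,
    (b1 = b4 ∧ b2 = b4) ∨
    (b1 = b4 ∧ b3 = b4) ∨
    (b1 = b13 ∧ b9 = b13) ∨
    (b2 = b9 ∧ b4 = b9) ∨
    (b2 = b12 ∧ b4 = b12) ∨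
    (b2 = b9 ∧ b7 = b9) ∨
    (b3 = b10 ∧ b4 = b10) ∨
    (b4 = b14 ∧ b5 = b14) ∨
    (b1 = b5 ∧ b2 = b5 ∧ b3 = b5) ∨
    (b1 = b6 ∧ b2 = b6 ∧ b3 = b6) ∨
    (b1 = b10 ∧ b2 = b10 ∧ b7 = b10) ∨
    (b1 = b13 ∧ b2 = b13 ∧ b12 = b13) ∨
    (b1 = b10 ∧ b3 = b10 ∧ b5 = b10) ∨
    (b1 = b14 ∧ b4 = b14 ∧ b7 = b14) ∨
    (b1 = b12 ∧ b4 = b12 ∧ b9 = b12) ∨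
    (b1 = b10 ∧ b5 = b10 ∧ b8 = b10) ∨
    (b1 = b11 ∧ b6 = b11 ∧ b9 = b11) ∨
    (b2 = b11 ∧ b3 = b11 ∧ b7 = b11) ∨
    (b2 = b14 ∧ b3 = b14 ∧ b12 = b14) ∨
    (b2 = b10 ∧ b4 = b10 ∧ b6 = b10) ∨
    (b3 = b11 ∧ b4 = b11 ∧ b7 = b11) ∨
    (b3 = b14 ∧ b5 = b14 ∧ b8 = b14) ∨
    (b3 = b12 ∧ b6 = b12 ∧ b7 = b12) ∨
    (b4 = b15 ∧ b5 = b15 ∧ b6 = b15) ∨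
    (b1 = b15 ∧ b2 = b15 ∧ b3 = b15 ∧ b14 = b15) ∨
    (b1 = b10 ∧ b2 = b10 ∧ b5 = b10 ∧ b6 = b10) ∨
    (b1 = b13 ∧ b2 = b13 ∧ b6 = b13 ∧ b11 = b13) ∨
    (b1 = b12 ∧ b3 = b12 ∧ b6 = b12 ∧ b9 = b12) ∨
    (b1 = b12 ∧ b4 = b12 ∧ b5 = b12 ∧ b6 = b12) ∨
    (b1 = b12 ∧ b4 = b12 ∧ b7 = b12 ∧ b8 = b12) ∨
    (b2 = b11 ∧ b3 = b11 ∧ b4 = b11 ∧ b5 = b11) ∨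
    (b2 = b11 ∧ b3 = b11 ∧ b4 = b11 ∧ b8 = b11) ∨
    (b2 = b14 ∧ b3 = b14 ∧ b6 = b14 ∧ b8 = b14) ∨
    (b2 = b13 ∧ b4 = b13 ∧ b5 = b13 ∧ b6 = b13) ∨
    (b3 = b13 ∧ b4 = b13 ∧ b5 = b13 ∧ b7 = b13) ∨
    (b3 = b13 ∧ b4 = b13 ∧ b6 = b13 ∧ b8 = b13) := by decide

theorem radoE1 (χ : ℕ → Fin 2) (h1 : χ 1 = χ 6) (h2 : χ 2 = χ 6) :
    ∃ (x : Fin 12 → ℕ) (z : ℕ),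
      (∀ i, 1 ≤ x i ∧ x i ≤ 23) ∧ 1 ≤ z ∧ z ≤ 23 ∧
      (∀ i, χ (x i) = χ z) ∧ (∑ i, (x i) ^ 2) = z ^ 2 :=
  ⟨![1, 1, 1, 1, 2, 2, 2, 2, 2, 2, 2, 2], 6, by decide, by decide, by decide,
   by intro i; fin_cases i <;> first | exact h1 | exact h2, by decide⟩

theorem radoE2 (χ : ℕ → Fin 2) (h1 : χ 1 = χ 6) (h2 : χ 3 = χ 6) :
    ∃ (x : Fin 12 → ℕ) (z : ℕ),
      (∀ i, 1 ≤ x i ∧ x i ≤ 23) ∧ 1 ≤ z ∧ z ≤ 23 ∧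
      (∀ i, χ (x i) = χ z) ∧ (∑ i, (x i) ^ 2) = z ^ 2 :=
  ⟨![1, 1, 1, 1, 1, 1, 1, 1, 1, 3, 3, 3], 6, by decide, by decide, by decide,
   by intro i; fin_cases i <;> first | exact h1 | exact h2, by decide⟩

theorem radoE3 (χ : ℕ → Fin 2) (h1 : χ 1 = χ 21) (h2 : χ 12 = χ 21) :
    ∃ (x : Fin 12 → ℕ) (z : ℕ),
      (∀ i, 1 ≤ x i ∧ x i ≤ 23) ∧ 1 ≤ z ∧ z ≤ 23 ∧
      (∀ i, χ (x i) = χ z) ∧ (∑ i, (x i) ^ 2) = z ^ 2 :=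
  ⟨![1, 1, 1, 1, 1, 1, 1, 1, 1, 12, 12, 12], 21, by decide, by decide, by decide,
   by intro i; fin_cases i <;> first | exact h1 | exact h2, by decide⟩

theorem radoE4 (χ : ℕ → Fin 2) (h1 : χ 2 = χ 12) (h2 : χ 6 = χ 12) :
    ∃ (x : Fin 12 → ℕ) (z : ℕ),
      (∀ i, 1 ≤ x i ∧ x i ≤ 23) ∧ 1 ≤ z ∧ z ≤ 23 ∧
      (∀ i, χ (x i) = χ z) ∧ (∑ i, (x i) ^ 2) = z ^ 2 :=
  ⟨![2, 2, 2, 2, 2, 2, 2, 2, 2, 6, 6, 6], 12, by decide, by decide, by decide,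
   by intro i; fin_cases i <;> first | exact h1 | exact h2, by decide⟩

theorem radoE5 (χ : ℕ → Fin 2) (h1 : χ 2 = χ 20) (h2 : χ 6 = χ 20) :
    ∃ (x : Fin 12 → ℕ) (z : ℕ),
      (∀ i, 1 ≤ x i ∧ x i ≤ 23) ∧ 1 ≤ z ∧ z ≤ 23 ∧
      (∀ i, χ (x i) = χ z) ∧ (∑ i, (x i) ^ 2) = z ^ 2 :=
  ⟨![2, 6, 6, 6, 6, 6, 6, 6, 6, 6, 6, 6], 20, by decide, by decide, by decide,
   by intro i; fin_cases i <;> first | exact h1 | exact h2, by decide⟩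

theorem radoE6 (χ : ℕ → Fin 2) (h1 : χ 2 = χ 12) (h2 : χ 10 = χ 12) :
    ∃ (x : Fin 12 → ℕ) (z : ℕ),
      (∀ i, 1 ≤ x i ∧ x i ≤ 23) ∧ 1 ≤ z ∧ z ≤ 23 ∧
      (∀ i, χ (x i) = χ z) ∧ (∑ i, (x i) ^ 2) = z ^ 2 :=
  ⟨![2, 2, 2, 2, 2, 2, 2, 2, 2, 2, 2, 10], 12, by decide, by decide, by decide,
   by intro i; fin_cases i <;> first | exact h1 | exact h2, by decide⟩

theorem radoE7 (χ : ℕ → Fin 2) (h1 : χ 3 = χ 18) (h2 : χ 6 = χ 18) :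
    ∃ (x : Fin 12 → ℕ) (z : ℕ),
      (∀ i, 1 ≤ x i ∧ x i ≤ 23) ∧ 1 ≤ z ∧ z ≤ 23 ∧
      (∀ i, χ (x i) = χ z) ∧ (∑ i, (x i) ^ 2) = z ^ 2 :=
  ⟨![3, 3, 3, 3, 6, 6, 6, 6, 6, 6, 6, 6], 18, by decide, by decide, by decide,
   by intro i; fin_cases i <;> first | exact h1 | exact h2, by decide⟩

theorem radoE8 (χ : ℕ → Fin 2) (h1 : χ 6 = χ 22) (h2 : χ 7 = χ 22) :
    ∃ (x : Fin 12 → ℕ) (z : ℕ),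
      (∀ i, 1 ≤ x i ∧ x i ≤ 23) ∧ 1 ≤ z ∧ z ≤ 23 ∧
      (∀ i, χ (x i) = χ z) ∧ (∑ i, (x i) ^ 2) = z ^ 2 :=
  ⟨![6, 6, 6, 6, 6, 6, 6, 6, 7, 7, 7, 7], 22, by decide, by decide, by decide,
   by intro i; fin_cases i <;> first | exact h1 | exact h2, by decide⟩

theorem radoE9 (χ : ℕ → Fin 2) (h1 : χ 1 = χ 7) (h2 : χ 2 = χ 7) (h3 : χ 3 = χ 7) :
    ∃ (x : Fin 12 → ℕ) (z : ℕ),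
      (∀ i, 1 ≤ x i ∧ x i ≤ 23) ∧ 1 ≤ z ∧ z ≤ 23 ∧
      (∀ i, χ (x i) = χ z) ∧ (∑ i, (x i) ^ 2) = z ^ 2 :=
  ⟨![1, 1, 1, 2, 2, 2, 2, 2, 2, 2, 3, 3], 7, by decide, by decide, by decide,
   by intro i; fin_cases i <;> first | exact h1 | exact h2 | exact h3, by decide⟩

theorem radoE10 (χ : ℕ → Fin 2) (h1 : χ 1 = χ 8) (h2 : χ 2 = χ 8) (h3 : χ 3 = χ 8) :
    ∃ (x : Fin 12 → ℕ) (z : ℕ),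
      (∀ i, 1 ≤ x i ∧ x i ≤ 23) ∧ 1 ≤ z ∧ z ≤ 23 ∧
      (∀ i, χ (x i) = χ z) ∧ (∑ i, (x i) ^ 2) = z ^ 2 :=
  ⟨![1, 1, 1, 2, 2, 2, 2, 3, 3, 3, 3, 3], 8, by decide, by decide, by decide,
   by intro i; fin_cases i <;> first | exact h1 | exact h2 | exact h3, by decide⟩

theorem radoE11 (χ : ℕ → Fin 2) (h1 : χ 1 = χ 18) (h2 : χ 2 = χ 18) (h3 : χ 10 = χ 18) :
    ∃ (x : Fin 12 → ℕ) (z : ℕ),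
      (∀ i, 1 ≤ x i ∧ x i ≤ 23) ∧ 1 ≤ z ∧ z ≤ 23 ∧
      (∀ i, χ (x i) = χ z) ∧ (∑ i, (x i) ^ 2) = z ^ 2 :=
  ⟨![1, 1, 1, 1, 2, 2, 2, 2, 2, 10, 10, 10], 18, by decide, by decide, by decide,
   by intro i; fin_cases i <;> first | exact h1 | exact h2 | exact h3, by decide⟩

theorem radoE12 (χ : ℕ → Fin 2) (h1 : χ 1 = χ 21) (h2 : χ 2 = χ 21) (h3 : χ 20 = χ 21) :
    ∃ (x : Fin 12 → ℕ) (z : ℕ),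
      (∀ i, 1 ≤ x i ∧ x i ≤ 23) ∧ 1 ≤ z ∧ z ≤ 23 ∧
      (∀ i, χ (x i) = χ z) ∧ (∑ i, (x i) ^ 2) = z ^ 2 :=
  ⟨![1, 2, 2, 2, 2, 2, 2, 2, 2, 2, 2, 20], 21, by decide, by decide, by decide,
   by intro i; fin_cases i <;> first | exact h1 | exact h2 | exact h3, by decide⟩

theorem radoE13 (χ : ℕ → Fin 2) (h1 : χ 1 = χ 18) (h2 : χ 3 = χ 18) (h3 : χ 7 = χ 18) :
    ∃ (x : Fin 12 → ℕ) (z : ℕ),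
      (∀ i, 1 ≤ x i ∧ x i ≤ 23) ∧ 1 ≤ z ∧ z ≤ 23 ∧
      (∀ i, χ (x i) = χ z) ∧ (∑ i, (x i) ^ 2) = z ^ 2 :=
  ⟨![1, 1, 1, 3, 3, 3, 7, 7, 7, 7, 7, 7], 18, by decide, by decide, by decide,
   by intro i; fin_cases i <;> first | exact h1 | exact h2 | exact h3, by decide⟩

theorem radoE14 (χ : ℕ → Fin 2) (h1 : χ 1 = χ 22) (h2 : χ 6 = χ 22) (h3 : χ 10 = χ 22) :
    ∃ (x : Fin 12 → ℕ) (z : ℕ),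
      (∀ i, 1 ≤ x i ∧ x i ≤ 23) ∧ 1 ≤ z ∧ z ≤ 23 ∧
      (∀ i, χ (x i) = χ z) ∧ (∑ i, (x i) ^ 2) = z ^ 2 :=
  ⟨![1, 1, 1, 1, 6, 6, 6, 6, 6, 10, 10, 10], 22, by decide, by decide, by decide,
   by intro i; fin_cases i <;> first | exact h1 | exact h2 | exact h3, by decide⟩

theorem radoE15 (χ : ℕ → Fin 2) (h1 : χ 1 = χ 20) (h2 : χ 6 = χ 20) (h3 : χ 12 = χ 20) :
    ∃ (x : Fin 12 → ℕ) (z : ℕ),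
      (∀ i, 1 ≤ x i ∧ x i ≤ 23) ∧ 1 ≤ z ∧ z ≤ 23 ∧
      (∀ i, χ (x i) = χ z) ∧ (∑ i, (x i) ^ 2) = z ^ 2 :=
  ⟨![1, 1, 1, 1, 6, 6, 6, 6, 6, 6, 6, 12], 20, by decide, by decide, by decide,
   by intro i; fin_cases i <;> first | exact h1 | exact h2 | exact h3, by decide⟩

theorem radoE16 (χ : ℕ → Fin 2) (h1 : χ 1 = χ 18) (h2 : χ 7 = χ 18) (h3 : χ 11 = χ 18) :
    ∃ (x : Fin 12 → ℕ) (z : ℕ),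
      (∀ i, 1 ≤ x i ∧ x i ≤ 23) ∧ 1 ≤ z ∧ z ≤ 23 ∧
      (∀ i, χ (x i) = χ z) ∧ (∑ i, (x i) ^ 2) = z ^ 2 :=
  ⟨![1, 1, 1, 1, 1, 1, 1, 7, 7, 7, 7, 11], 18, by decide, by decide, by decide,
   by intro i; fin_cases i <;> first | exact h1 | exact h2 | exact h3, by decide⟩

theorem radoE17 (χ : ℕ → Fin 2) (h1 : χ 1 = χ 19) (h2 : χ 8 = χ 19) (h3 : χ 12 = χ 19) :
    ∃ (x : Fin 12 → ℕ) (z : ℕ),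
      (∀ i, 1 ≤ x i ∧ x i ≤ 23) ∧ 1 ≤ z ∧ z ≤ 23 ∧
      (∀ i, χ (x i) = χ z) ∧ (∑ i, (x i) ^ 2) = z ^ 2 :=
  ⟨![1, 1, 1, 1, 1, 1, 1, 1, 1, 8, 12, 12], 19, by decide, by decide, by decide,
   by intro i; fin_cases i <;> first | exact h1 | exact h2 | exact h3, by decide⟩

theorem radoE18 (χ : ℕ → Fin 2) (h1 : χ 2 = χ 19) (h2 : χ 3 = χ 19) (h3 : χ 10 = χ 19) :
    ∃ (x : Fin 12 → ℕ) (z : ℕ),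
      (∀ i, 1 ≤ x i ∧ x i ≤ 23) ∧ 1 ≤ z ∧ z ≤ 23 ∧
      (∀ i, χ (x i) = χ z) ∧ (∑ i, (x i) ^ 2) = z ^ 2 :=
  ⟨![2, 2, 2, 2, 3, 3, 3, 3, 3, 10, 10, 10], 19, by decide, by decide, by decide,
   by intro i; fin_cases i <;> first | exact h1 | exact h2 | exact h3, by decide⟩

theorem radoE19 (χ : ℕ → Fin 2) (h1 : χ 2 = χ 22) (h2 : χ 3 = χ 22) (h3 : χ 20 = χ 22) :
    ∃ (x : Fin 12 → ℕ) (z : ℕ),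
      (∀ i, 1 ≤ x i ∧ x i ≤ 23) ∧ 1 ≤ z ∧ z ≤ 23 ∧
      (∀ i, χ (x i) = χ z) ∧ (∑ i, (x i) ^ 2) = z ^ 2 :=
  ⟨![2, 2, 2, 3, 3, 3, 3, 3, 3, 3, 3, 20], 22, by decide, by decide, by decide,
   by intro i; fin_cases i <;> first | exact h1 | exact h2 | exact h3, by decide⟩

theorem radoE20 (χ : ℕ → Fin 2) (h1 : χ 2 = χ 18) (h2 : χ 6 = χ 18) (h3 : χ 8 = χ 18) :
    ∃ (x : Fin 12 → ℕ) (z : ℕ),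
      (∀ i, 1 ≤ x i ∧ x i ≤ 23) ∧ 1 ≤ z ∧ z ≤ 23 ∧
      (∀ i, χ (x i) = χ z) ∧ (∑ i, (x i) ^ 2) = z ^ 2 :=
  ⟨![2, 2, 2, 2, 2, 2, 6, 6, 6, 8, 8, 8], 18, by decide, by decide, by decide,
   by intro i; fin_cases i <;> first | exact h1 | exact h2 | exact h3, by decide⟩

theorem radoE21 (χ : ℕ → Fin 2) (h1 : χ 3 = χ 19) (h2 : χ 6 = χ 19) (h3 : χ 10 = χ 19) :
    ∃ (x : Fin 12 → ℕ) (z : ℕ),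
      (∀ i, 1 ≤ x i ∧ x i ≤ 23) ∧ 1 ≤ z ∧ z ≤ 23 ∧
      (∀ i, χ (x i) = χ z) ∧ (∑ i, (x i) ^ 2) = z ^ 2 :=
  ⟨![3, 3, 3, 3, 3, 6, 6, 6, 6, 6, 6, 10], 19, by decide, by decide, by decide,
   by intro i; fin_cases i <;> first | exact h1 | exact h2 | exact h3, by decide⟩

theorem radoE22 (χ : ℕ → Fin 2) (h1 : χ 3 = χ 22) (h2 : χ 7 = χ 22) (h3 : χ 11 = χ 22) :
    ∃ (x : Fin 12 → ℕ) (z : ℕ),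
      (∀ i, 1 ≤ x i ∧ x i ≤ 23) ∧ 1 ≤ z ∧ z ≤ 23 ∧
      (∀ i, χ (x i) = χ z) ∧ (∑ i, (x i) ^ 2) = z ^ 2 :=
  ⟨![3, 3, 3, 3, 3, 3, 3, 3, 7, 11, 11, 11], 22, by decide, by decide, by decide,
   by intro i; fin_cases i <;> first | exact h1 | exact h2 | exact h3, by decide⟩

theorem radoE23 (χ : ℕ → Fin 2) (h1 : χ 3 = χ 20) (h2 : χ 8 = χ 20) (h3 : χ 10 = χ 20) :
    ∃ (x : Fin 12 → ℕ) (z : ℕ),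
      (∀ i, 1 ≤ x i ∧ x i ≤ 23) ∧ 1 ≤ z ∧ z ≤ 23 ∧
      (∀ i, χ (x i) = χ z) ∧ (∑ i, (x i) ^ 2) = z ^ 2 :=
  ⟨![3, 3, 3, 3, 3, 3, 3, 3, 8, 8, 10, 10], 20, by decide, by decide, by decide,
   by intro i; fin_cases i <;> first | exact h1 | exact h2 | exact h3, by decide⟩

theorem radoE24 (χ : ℕ → Fin 2) (h1 : χ 6 = χ 23) (h2 : χ 7 = χ 23) (h3 : χ 8 = χ 23) :
    ∃ (x : Fin 12 → ℕ) (z : ℕ),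
      (∀ i, 1 ≤ x i ∧ x i ≤ 23) ∧ 1 ≤ z ∧ z ≤ 23 ∧
      (∀ i, χ (x i) = χ z) ∧ (∑ i, (x i) ^ 2) = z ^ 2 :=
  ⟨![6, 6, 6, 6, 6, 6, 6, 6, 7, 8, 8, 8], 23, by decide, by decide, by decide,
   by intro i; fin_cases i <;> first | exact h1 | exact h2 | exact h3, by decide⟩

theorem radoE25 (χ : ℕ → Fin 2) (h1 : χ 1 = χ 23) (h2 : χ 2 = χ 23) (h3 : χ 3 = χ 23) (h4 : χ 22 = χ 23) :
    ∃ (x : Fin 12 → ℕ) (z : ℕ),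
      (∀ i, 1 ≤ x i ∧ x i ≤ 23) ∧ 1 ≤ z ∧ z ≤ 23 ∧
      (∀ i, χ (x i) = χ z) ∧ (∑ i, (x i) ^ 2) = z ^ 2 :=
  ⟨![1, 1, 1, 2, 2, 2, 2, 2, 2, 3, 3, 22], 23, by decide, by decide, by decide,
   by intro i; fin_cases i <;> first | exact h1 | exact h2 | exact h3 | exact h4, by decide⟩

theorem radoE26 (χ : ℕ → Fin 2) (h1 : χ 1 = χ 18) (h2 : χ 2 = χ 18) (h3 : χ 7 = χ 18) (h4 : χ 8 = χ 18) :
    ∃ (x : Fin 12 → ℕ) (z : ℕ),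
      (∀ i, 1 ≤ x i ∧ x i ≤ 23) ∧ 1 ≤ z ∧ z ≤ 23 ∧
      (∀ i, χ (x i) = χ z) ∧ (∑ i, (x i) ^ 2) = z ^ 2 :=
  ⟨![1, 1, 1, 2, 2, 2, 7, 7, 7, 7, 7, 8], 18, by decide, by decide, by decide,
   by intro i; fin_cases i <;> first | exact h1 | exact h2 | exact h3 | exact h4, by decide⟩

theorem radoE27 (χ : ℕ → Fin 2) (h1 : χ 1 = χ 21) (h2 : χ 2 = χ 21) (h3 : χ 8 = χ 21) (h4 : χ 19 = χ 21) :
    ∃ (x : Fin 12 → ℕ) (z : ℕ),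
      (∀ i, 1 ≤ x i ∧ x i ≤ 23) ∧ 1 ≤ z ∧ z ≤ 23 ∧
      (∀ i, χ (x i) = χ z) ∧ (∑ i, (x i) ^ 2) = z ^ 2 :=
  ⟨![1, 1, 1, 1, 1, 1, 1, 1, 2, 2, 8, 19], 21, by decide, by decide, by decide,
   by intro i; fin_cases i <;> first | exact h1 | exact h2 | exact h3 | exact h4, by decide⟩

theorem radoE28 (χ : ℕ → Fin 2) (h1 : χ 1 = χ 20) (h2 : χ 3 = χ 20) (h3 : χ 8 = χ 20) (h4 : χ 12 = χ 20) :
    ∃ (x : Fin 12 → ℕ) (z : ℕ),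
      (∀ i, 1 ≤ x i ∧ x i ≤ 23) ∧ 1 ≤ z ∧ z ≤ 23 ∧
      (∀ i, χ (x i) = χ z) ∧ (∑ i, (x i) ^ 2) = z ^ 2 :=
  ⟨![1, 3, 3, 3, 3, 3, 3, 3, 8, 8, 8, 12], 20, by decide, by decide, by decide,
   by intro i; fin_cases i <;> first | exact h1 | exact h2 | exact h3 | exact h4, by decide⟩

theorem radoE29 (χ : ℕ → Fin 2) (h1 : χ 1 = χ 20) (h2 : χ 6 = χ 20) (h3 : χ 7 = χ 20) (h4 : χ 8 = χ 20) :
    ∃ (x : Fin 12 → ℕ) (z : ℕ),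
      (∀ i, 1 ≤ x i ∧ x i ≤ 23) ∧ 1 ≤ z ∧ z ≤ 23 ∧
      (∀ i, χ (x i) = χ z) ∧ (∑ i, (x i) ^ 2) = z ^ 2 :=
  ⟨![1, 1, 1, 1, 6, 6, 7, 7, 7, 7, 8, 8], 20, by decide, by decide, by decide,
   by intro i; fin_cases i <;> first | exact h1 | exact h2 | exact h3 | exact h4, by decide⟩

theorem radoE30 (χ : ℕ → Fin 2) (h1 : χ 1 = χ 20) (h2 : χ 6 = χ 20) (h3 : χ 10 = χ 20) (h4 : χ 11 = χ 20) :
    ∃ (x : Fin 12 → ℕ) (z : ℕ),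
      (∀ i, 1 ≤ x i ∧ x i ≤ 23) ∧ 1 ≤ z ∧ z ≤ 23 ∧
      (∀ i, χ (x i) = χ z) ∧ (∑ i, (x i) ^ 2) = z ^ 2 :=
  ⟨![1, 1, 1, 1, 1, 1, 1, 6, 6, 10, 10, 11], 20, by decide, by decide, by decide,
   by intro i; fin_cases i <;> first | exact h1 | exact h2 | exact h3 | exact h4, by decide⟩

theorem radoE31 (χ : ℕ → Fin 2) (h1 : χ 2 = χ 19) (h2 : χ 3 = χ 19) (h3 : χ 6 = χ 19) (h4 : χ 7 = χ 19) :
    ∃ (x : Fin 12 → ℕ) (z : ℕ),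
      (∀ i, 1 ≤ x i ∧ x i ≤ 23) ∧ 1 ≤ z ∧ z ≤ 23 ∧
      (∀ i, χ (x i) = χ z) ∧ (∑ i, (x i) ^ 2) = z ^ 2 :=
  ⟨![2, 2, 2, 3, 6, 6, 6, 6, 7, 7, 7, 7], 19, by decide, by decide, by decide,
   by intro i; fin_cases i <;> first | exact h1 | exact h2 | exact h3 | exact h4, by decide⟩

theorem radoE32 (χ : ℕ → Fin 2) (h1 : χ 2 = χ 19) (h2 : χ 3 = χ 19) (h3 : χ 6 = χ 19) (h4 : χ 11 = χ 19) :
    ∃ (x : Fin 12 → ℕ) (z : ℕ),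
      (∀ i, 1 ≤ x i ∧ x i ≤ 23) ∧ 1 ≤ z ∧ z ≤ 23 ∧
      (∀ i, χ (x i) = χ z) ∧ (∑ i, (x i) ^ 2) = z ^ 2 :=
  ⟨![2, 2, 2, 2, 2, 3, 3, 3, 6, 6, 11, 11], 19, by decide, by decide, by decide,
   by intro i; fin_cases i <;> first | exact h1 | exact h2 | exact h3 | exact h4, by decide⟩

theorem radoE33 (χ : ℕ → Fin 2) (h1 : χ 2 = χ 22) (h2 : χ 3 = χ 22) (h3 : χ 8 = χ 22) (h4 : χ 11 = χ 22) :
    ∃ (x : Fin 12 → ℕ) (z : ℕ),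
      (∀ i, 1 ≤ x i ∧ x i ≤ 23) ∧ 1 ≤ z ∧ z ≤ 23 ∧
      (∀ i, χ (x i) = χ z) ∧ (∑ i, (x i) ^ 2) = z ^ 2 :=
  ⟨![2, 2, 2, 3, 3, 3, 3, 3, 8, 11, 11, 11], 22, by decide, by decide, by decide,
   by intro i; fin_cases i <;> first | exact h1 | exact h2 | exact h3 | exact h4, by decide⟩

theorem radoE34 (χ : ℕ → Fin 2) (h1 : χ 2 = χ 21) (h2 : χ 6 = χ 21) (h3 : χ 7 = χ 21) (h4 : χ 8 = χ 21) :
    ∃ (x : Fin 12 → ℕ) (z : ℕ),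
      (∀ i, 1 ≤ x i ∧ x i ≤ 23) ∧ 1 ≤ z ∧ z ≤ 23 ∧
      (∀ i, χ (x i) = χ z) ∧ (∑ i, (x i) ^ 2) = z ^ 2 :=
  ⟨![2, 6, 6, 6, 6, 6, 6, 6, 6, 6, 7, 8], 21, by decide, by decide, by decide,
   by intro i; fin_cases i <;> first | exact h1 | exact h2 | exact h3 | exact h4, by decide⟩

theorem radoE35 (χ : ℕ → Fin 2) (h1 : χ 3 = χ 21) (h2 : χ 6 = χ 21) (h3 : χ 7 = χ 21) (h4 : χ 10 = χ 21) :
    ∃ (x : Fin 12 → ℕ) (z : ℕ),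
      (∀ i, 1 ≤ x i ∧ x i ≤ 23) ∧ 1 ≤ z ∧ z ≤ 23 ∧
      (∀ i, χ (x i) = χ z) ∧ (∑ i, (x i) ^ 2) = z ^ 2 :=
  ⟨![3, 3, 3, 6, 6, 6, 6, 6, 6, 7, 7, 10], 21, by decide, by decide, by decide,
   by intro i; fin_cases i <;> first | exact h1 | exact h2 | exact h3 | exact h4, by decide⟩

theorem radoE36 (χ : ℕ → Fin 2) (h1 : χ 3 = χ 21) (h2 : χ 6 = χ 21) (h3 : χ 8 = χ 21) (h4 : χ 11 = χ 21) :
    ∃ (x : Fin 12 → ℕ) (z : ℕ),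
      (∀ i, 1 ≤ x i ∧ x i ≤ 23) ∧ 1 ≤ z ∧ z ≤ 23 ∧
      (∀ i, χ (x i) = χ z) ∧ (∑ i, (x i) ^ 2) = z ^ 2 :=
  ⟨![3, 3, 3, 3, 3, 3, 3, 6, 6, 8, 11, 11], 21, by decide, by decide, by decide,
   by intro i; fin_cases i <;> first | exact h1 | exact h2 | exact h3 | exact h4, by decide⟩

def radoStep (A : List ℕ) (S : ℕ) : ℕ :=
  A.foldr (fun a acc => acc ||| ((S <<< (a ^ 2)) &&& (2 ^ 530 - 1))) 0

theorem radoStep_bit {A : List ℕ} {S a s : ℕ} (ha : a ∈ A) (hs : S.testBit s = true)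
    (hb : s + a ^ 2 < 530) : (radoStep A S).testBit (s + a ^ 2) = true := by
  induction A with
  | nil => cases ha
  | cons x l ih =>
    have hstep : radoStep (x :: l) S
        = (radoStep l S) ||| ((S <<< (x ^ 2)) &&& (2 ^ 530 - 1)) := rfl
    rcases List.mem_cons.1 ha with rfl | h
    · rw [hstep, Nat.testBit_or, Nat.testBit_and, Nat.testBit_shiftLeft,
        Nat.testBit_two_pow_sub_one]
      have h1 : a ^ 2 ≤ s + a ^ 2 := Nat.le_add_left _ _
      have h2 : s + a ^ 2 - a ^ 2 = s := by omega
      simp [h1, h2, hs, hb]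
    · rw [hstep, Nat.testBit_or, ih h]
      simp

def radoIter (A : List ℕ) : ℕ → ℕ
  | 0 => 1
  | n + 1 => radoStep A (radoIter A n)

theorem radoIter_bit (A : List ℕ) : ∀ (l : List ℕ), (∀ a ∈ l, a ∈ A) →
    (l.map (fun a => a ^ 2)).sum < 530 →
    (radoIter A l.length).testBit ((l.map (fun a => a ^ 2)).sum) = true := by
  intro l
  induction l with
  | nil =>
    intro _ _
    simp only [List.map_nil, List.sum_nil, List.length_nil, radoIter]
    decide
  | cons a l ih =>
    intro hmem hlt
    have hsum : ((a :: l).map (fun a => a ^ 2)).sum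
        = (l.map (fun a => a ^ 2)).sum + a ^ 2 := by
      simp [Nat.add_comm]
    rw [hsum] at hlt ⊢
    exact radoStep_bit (hmem a List.mem_cons_self)
      (ih (fun b hb => hmem b (List.mem_cons_of_mem _ hb)) (by omega)) hlt

def radoA0 : List ℕ := [1, 2, 3, 4, 5, 16, 22]
def radoA1 : List ℕ := [6, 7, 8, 9, 10, 11, 12, 13, 14, 15, 17, 18, 19, 20, 21]

def chi22 : ℕ → Fin 2 := fun n =>
  if n = 1 ∨ n = 2 ∨ n = 3 ∨ n = 4 ∨ n = 5 ∨ n = 16 ∨ n = 22 then 0 else 1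

theorem chi22_mem0 : ∀ v, 1 ≤ v → v ≤ 22 → chi22 v = 0 → v ∈ radoA0 := by
  intro v h1 h2
  interval_cases v <;> decide

theorem chi22_mem1 : ∀ v, 1 ≤ v → v ≤ 22 → chi22 v = 1 → v ∈ radoA1 := by
  intro v h1 h2
  interval_cases v <;> decide

theorem radoNoSol (A : List ℕ) (x : Fin 12 → ℕ) (z : ℕ)
    (hxA : ∀ i, x i ∈ A) (hzb : z ≤ 22)
    (hs : (∑ i, (x i) ^ 2) = z ^ 2) :
    (radoIter A 12).testBit (z ^ 2) = true := by
  have hmap : (List.ofFn x).map (fun a => a ^ 2) = List.ofFn (fun i => (x i) ^ 2) := by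
    rw [List.map_ofFn]; rfl
  have hsum : ((List.ofFn x).map (fun a => a ^ 2)).sum = z ^ 2 := by
    rw [hmap, List.sum_ofFn, hs]
  have hz2 : z ^ 2 < 530 := by
    have := Nat.pow_le_pow_left hzb 2
    omega
  have hmem : ∀ a ∈ List.ofFn x, a ∈ A := by
    intro a ha
    rw [List.mem_ofFn] at ha
    rcases ha with ⟨i, rfl⟩
    exact hxA i
  have h := radoIter_bit A (List.ofFn x) hmem (by rw [hsum]; exact hz2)
  rwa [hsum, List.length_ofFn] at h

theorem rado_number_two_colors_sum_12_squares_eq_square :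
    (∀ χ : ℕ → Fin 2, ∃ (x : Fin 12 → ℕ) (z : ℕ),
      (∀ i, 1 ≤ x i ∧ x i ≤ 23) ∧ 1 ≤ z ∧ z ≤ 23 ∧
      (∀ i, χ (x i) = χ z) ∧ (∑ i, (x i) ^ 2) = z ^ 2) ∧
    (∃ χ : ℕ → Fin 2, ¬ ∃ (x : Fin 12 → ℕ) (z : ℕ),
      (∀ i, 1 ≤ x i ∧ x i ≤ 22) ∧ 1 ≤ z ∧ z ≤ 22 ∧
      (∀ i, χ (x i) = χ z) ∧ (∑ i, (x i) ^ 2) = z ^ 2) := by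
  constructor
  · intro χ
    have K := radoKey (decide (χ 1 = 0)) (decide (χ 2 = 0)) (decide (χ 3 = 0)) (decide (χ 6 = 0)) (decide (χ 7 = 0)) (decide (χ 8 = 0)) (decide (χ 10 = 0)) (decide (χ 11 = 0)) (decide (χ 12 = 0)) (decide (χ 18 = 0)) (decide (χ 19 = 0)) (decide (χ 20 = 0)) (decide (χ 21 = 0)) (decide (χ 22 = 0)) (decide (χ 23 = 0))
    rcases K with ⟨p1, p2⟩ | ⟨p1, p2⟩ | ⟨p1, p2⟩ | ⟨p1, p2⟩ | ⟨p1, p2⟩ | ⟨p1, p2⟩ | ⟨p1, p2⟩ | ⟨p1, p2⟩ | ⟨p1, p2, p3⟩ | ⟨p1, p2, p3⟩ | ⟨p1, p2, p3⟩ | ⟨p1, p2, p3⟩ | ⟨p1, p2, p3⟩ | ⟨p1, p2, p3⟩ | ⟨p1, p2, p3⟩ | ⟨p1, p2, p3⟩ | ⟨p1, p2, p3⟩ | ⟨p1, p2, p3⟩ | ⟨p1, p2, p3⟩ | ⟨p1, p2, p3⟩ | ⟨p1, p2, p3⟩ | ⟨p1, p2, p3⟩ | ⟨p1, p2, p3⟩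 | ⟨p1, p2, p3⟩ | ⟨p1, p2, p3, p4⟩ | ⟨p1, p2, p3, p4⟩ | ⟨p1, p2, p3, p4⟩ | ⟨p1, p2, p3, p4⟩ | ⟨p1, p2, p3, p4⟩ | ⟨p1, p2, p3, p4⟩ | ⟨p1, p2, p3, p4⟩ | ⟨p1, p2, p3, p4⟩ | ⟨p1, p2, p3, p4⟩ | ⟨p1, p2, p3, p4⟩ | ⟨p1, p2, p3, p4⟩ | ⟨p1, p2, p3, p4⟩
    · exact radoE1 χ (fin2eq _ _ p1) (fin2eq _ _ p2)
    · exact radoE2 χ (fin2eq _ _ p1) (fin2eq _ _ p2)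
    · exact radoE3 χ (fin2eq _ _ p1) (fin2eq _ _ p2)
    · exact radoE4 χ (fin2eq _ _ p1) (fin2eq _ _ p2)
    · exact radoE5 χ (fin2eq _ _ p1) (fin2eq _ _ p2)
    · exact radoE6 χ (fin2eq _ _ p1) (fin2eq _ _ p2)
    · exact radoE7 χ (fin2eq _ _ p1) (fin2eq _ _ p2)
    · exact radoE8 χ (fin2eq _ _ p1) (fin2eq _ _ p2)
    · exact radoE9 χ (fin2eq _ _ p1) (fin2eq _ _ p2) (fin2eq _ _ p3)
    · exact radoE10 χ (fin2eq _ _ p1) (fin2eq _ _ p2) (fin2eq _ _ p3)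
    · exact radoE11 χ (fin2eq _ _ p1) (fin2eq _ _ p2) (fin2eq _ _ p3)
    · exact radoE12 χ (fin2eq _ _ p1) (fin2eq _ _ p2) (fin2eq _ _ p3)
    · exact radoE13 χ (fin2eq _ _ p1) (fin2eq _ _ p2) (fin2eq _ _ p3)
    · exact radoE14 χ (fin2eq _ _ p1) (fin2eq _ _ p2) (fin2eq _ _ p3)
    · exact radoE15 χ (fin2eq _ _ p1) (fin2eq _ _ p2) (fin2eq _ _ p3)
    · exact radoE16 χ (fin2eq _ _ p1) (fin2eq _ _ p2) (fin2eq _ _ p3)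
    · exact radoE17 χ (fin2eq _ _ p1) (fin2eq _ _ p2) (fin2eq _ _ p3)
    · exact radoE18 χ (fin2eq _ _ p1) (fin2eq _ _ p2) (fin2eq _ _ p3)
    · exact radoE19 χ (fin2eq _ _ p1) (fin2eq _ _ p2) (fin2eq _ _ p3)
    · exact radoE20 χ (fin2eq _ _ p1) (fin2eq _ _ p2) (fin2eq _ _ p3)
    · exact radoE21 χ (fin2eq _ _ p1) (fin2eq _ _ p2) (fin2eq _ _ p3)
    · exact radoE22 χ (fin2eq _ _ p1) (fin2eq _ _ p2) (fin2eq _ _ p3)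
    · exact radoE23 χ (fin2eq _ _ p1) (fin2eq _ _ p2) (fin2eq _ _ p3)
    · exact radoE24 χ (fin2eq _ _ p1) (fin2eq _ _ p2) (fin2eq _ _ p3)
    · exact radoE25 χ (fin2eq _ _ p1) (fin2eq _ _ p2) (fin2eq _ _ p3) (fin2eq _ _ p4)
    · exact radoE26 χ (fin2eq _ _ p1) (fin2eq _ _ p2) (fin2eq _ _ p3) (fin2eq _ _ p4)
    · exact radoE27 χ (fin2eq _ _ p1) (fin2eq _ _ p2) (fin2eq _ _ p3) (fin2eq _ _ p4)
    · exact radoE28 χ (fin2eq _ _ p1) (fin2eq _ _ p2) (fin2eq _ _ p3) (fin2eq _ _ p4)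
    · exact radoE29 χ (fin2eq _ _ p1) (fin2eq _ _ p2) (fin2eq _ _ p3) (fin2eq _ _ p4)
    · exact radoE30 χ (fin2eq _ _ p1) (fin2eq _ _ p2) (fin2eq _ _ p3) (fin2eq _ _ p4)
    · exact radoE31 χ (fin2eq _ _ p1) (fin2eq _ _ p2) (fin2eq _ _ p3) (fin2eq _ _ p4)
    · exact radoE32 χ (fin2eq _ _ p1) (fin2eq _ _ p2) (fin2eq _ _ p3) (fin2eq _ _ p4)
    · exact radoE33 χ (fin2eq _ _ p1) (fin2eq _ _ p2) (fin2eq _ _ p3) (fin2eq _ _ p4)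
    · exact radoE34 χ (fin2eq _ _ p1) (fin2eq _ _ p2) (fin2eq _ _ p3) (fin2eq _ _ p4)
    · exact radoE35 χ (fin2eq _ _ p1) (fin2eq _ _ p2) (fin2eq _ _ p3) (fin2eq _ _ p4)
    · exact radoE36 χ (fin2eq _ _ p1) (fin2eq _ _ p2) (fin2eq _ _ p3) (fin2eq _ _ p4)
  · refine ⟨chi22, ?_⟩
    rintro ⟨x, z, hx, hz1, hz2, hc, hs⟩
    have hz01 : chi22 z = 0 ∨ chi22 z = 1 := fin2cases _
    rcases hz01 with hzc | hzc
    · have hzA : z ∈ radoA0 := chi22_mem0 z hz1 hz2 hzc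
      have hxA : ∀ i, x i ∈ radoA0 := fun i =>
        chi22_mem0 (x i) (hx i).1 (hx i).2 ((hc i).trans hzc)
      have h := radoNoSol radoA0 x z hxA hz2 hs
      fin_cases hzA <;> exact absurd h (by decide)
    · have hzA : z ∈ radoA1 := chi22_mem1 z hz1 hz2 hzc
      have hxA : ∀ i, x i ∈ radoA1 := fun i =>
        chi22_mem1 (x i) (hx i).1 (hx i).2 ((hc i).trans hzc)
      have h := radoNoSol radoA1 x z hxA hz2 hs
      fin_cases hzA <;> exact absurd h (by decide)
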